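/- Let X be a discrete log-concave random variable supported on the positive integers ℕ \ {0}, with median Med(X). Then for all t > 1, P(X > Med(X)·t) ≤ exp(−t·(log 2)/2), and for all ε ∈ (0,1), P(X ≤ Med(X)·ε) ≤ 2·(log 2)·ε. -/
import Mathlib

/-- The support of `f : ℤ → ℝ` is contiguous. -/
def ContigSupportInt (f : ℤ → ℝ) : Prop :=
  ∀ a b c : ℤ, a ≤ b → b ≤ c → 0 < f a → 0 < f c → 0 < f b

/-- `p` is the p.m.f. of a log-concave probability measure on `ℤ`. -/
def IsLogConcavePMF (p : ℤ → ℝ) : Prop :=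
  (∀ n, 0 ≤ p n) ∧ Summable p ∧ (∑' n : ℤ, p n) = 1 ∧
    (∀ n : ℤ, p (n - 1) * p (n + 1) ≤ p n ^ 2) ∧ ContigSupportInt p

/-- `S ⊆ ℤ` is an interval. -/
def IsIntervalZ (S : Set ℤ) : Prop :=
  ∀ a b c : ℤ, a ≤ b → b ≤ c → a ∈ S → c ∈ S → b ∈ S

/-- The measure of a set `S ⊆ ℤ` under the p.m.f. `p`. -/
noncomputable def measOf (p : ℤ → ℝ) (S : Set ℤ) : ℝ :=
  ∑' n : ℤ, S.indicator p n

/-! ### Auxiliary lemmas on the p.m.f. -/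

lemma crossOne (p : ℤ → ℝ) (h0 : ∀ n, 0 ≤ p n)
    (hlc : ∀ n : ℤ, p (n - 1) * p (n + 1) ≤ p n ^ 2)
    (hcs : ContigSupportInt p) :
    ∀ (d : ℕ) (a : ℤ), p (a - 1) * p (a + d + 1) ≤ p a * p (a + d) := by
  intro d
  induction d with
  | zero => intro a; simpa [sq] using hlc a
  | succ d ih =>
    intro a
    have harg1 : a + ((d : ℤ) + 1) + 1 = (a + d + 1) + 1 := by ring
    have harg2 : a + ((d : ℤ) + 1) = (a + d + 1) := by ring
    push_cast
    rw [harg1, harg2]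
    rcases (h0 (a + d + 1)).eq_or_lt with hz | hpos
    · have hz2 : p (a - 1) * p (a + d + 1 + 1) = 0 := by
        rcases (h0 (a - 1)).eq_or_lt with h1 | h1
        · rw [← h1]; ring
        rcases (h0 (a + d + 1 + 1)).eq_or_lt with h2 | h2
        · rw [← h2]; ring
        · exfalso
          have := hcs (a - 1) (a + d + 1) (a + d + 1 + 1) (by omega) (by omega) h1 h2
          rw [← hz] at this; exact lt_irrefl 0 this
      rw [hz2]
      exact mul_nonneg (h0 _) (h0 _)
    · have h1 := ih a
      have h2 := hlc (a + d + 1)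
      have h2' : p (a + d) * p (a + d + 1 + 1) ≤ p (a + d + 1) ^ 2 := by
        have e : a + d + 1 - 1 = a + d := by ring
        rwa [e] at h2
      have key : (p (a - 1) * p (a + d + 1 + 1)) * p (a + d + 1) ≤
          (p a * p (a + d + 1)) * p (a + d + 1) := by
        nlinarith [h0 a, h0 (a - 1), h0 (a + d), h0 (a + d + 1 + 1), h1, h2']
      exact le_of_mul_le_mul_right key hpos

lemma crossOne' (p : ℤ → ℝ) (h0 : ∀ n, 0 ≤ p n)
    (hlc : ∀ n : ℤ, p (n - 1) * p (n + 1) ≤ p n ^ 2)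
    (hcs : ContigSupportInt p) (a b : ℤ) (hab : a ≤ b) :
    p (a - 1) * p (b + 1) ≤ p a * p b := by
  have hd : b = a + ((b - a).toNat : ℤ) := by omega
  rw [hd]
  exact crossOne p h0 hlc hcs _ a

lemma crossS (p : ℤ → ℝ) (h0 : ∀ n, 0 ≤ p n)
    (hlc : ∀ n : ℤ, p (n - 1) * p (n + 1) ≤ p n ^ 2)
    (hcs : ContigSupportInt p) :
    ∀ (s : ℕ) (a b : ℤ), a ≤ b → p (a - s) * p (b + s) ≤ p a * p b := by
  intro s
  induction s with
  | zero => intro a b _; norm_num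
  | succ s ih =>
    intro a b hab
    have e1 : a - ((s : ℤ) + 1) = (a - s) - 1 := by ring
    have e2 : b + ((s : ℤ) + 1) = (b + s) + 1 := by ring
    push_cast
    rw [e1, e2]
    calc p (a - s - 1) * p (b + s + 1) ≤ p (a - s) * p (b + s) :=
          crossOne' p h0 hlc hcs _ _ (by omega)
      _ ≤ p a * p b := ih a b hab

lemma crossA (p : ℤ → ℝ) (h0 : ∀ n, 0 ≤ p n)
    (hlc : ∀ n : ℤ, p (n - 1) * p (n + 1) ≤ p n ^ 2)
    (hcs : ContigSupportInt p) (j k : ℤ) (d : ℕ) (hjk : j ≤ k) :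
    p j * p (k + d) ≤ p k * p (j + d) := by
  by_cases h : j + d ≤ k
  · have h' := crossS p h0 hlc hcs d (j + d) k h
    have e : j + (d : ℤ) - d = j := by ring
    rw [e] at h'
    linarith [h']
  · push_neg at h
    set s := (k - j).toNat with hs
    have hsz : (s : ℤ) = k - j := Int.toNat_of_nonneg (by omega)
    have h' := crossS p h0 hlc hcs s k (j + d) (by omega)
    rw [hsz] at h'
    have e1 : k - (k - j) = j := by ring
    have e2 : j + (d : ℤ) + (k - j) = k + d := by ring
    rw [e1, e2] at h'
    linarith [h']

/-! ### measOf basics -/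

lemma measOf_rep (p : ℤ → ℝ) (c : ℤ) :
    measOf p { n : ℤ | c ≤ n } = ∑' d : ℕ, p (c + d) := by
  have hinj : Function.Injective (fun d : ℕ => c + (d : ℤ)) := by
    intro d1 d2 h
    simp only [add_right_inj, Int.natCast_inj] at h
    exact h
  have hzero : Function.support (({ n : ℤ | c ≤ n}).indicator p) ⊆
      Set.range (fun d : ℕ => c + (d : ℤ)) := by
    intro n hn
    by_contra hc
    apply hn
    apply Set.indicator_of_notMem
    simp only [Set.mem_setOf_eq]
    intro hcn
    exact hc ⟨(n - c).toNat, by simp; omega⟩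
  have h1 := hinj.tsum_eq hzero
  rw [measOf, ← h1]
  exact tsum_congr (fun d => Set.indicator_of_mem (by simp [Set.mem_setOf_eq]) p)

lemma measOf_mono (p : ℤ → ℝ) (h0 : ∀ n, 0 ≤ p n) (hsum : Summable p)
    {S T : Set ℤ} (hST : S ⊆ T) : measOf p S ≤ measOf p T :=
  Summable.tsum_le_tsum (fun n => Set.indicator_le_indicator_of_subset hST h0 n)
    (hsum.indicator S) (hsum.indicator T)

lemma measOf_nonneg (p : ℤ → ℝ) (h0 : ∀ n, 0 ≤ p n) (S : Set ℤ) : 0 ≤ measOf p S :=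
  tsum_nonneg (fun n => Set.indicator_nonneg (fun a _ => h0 a) n)

lemma measOf_compl (p : ℤ → ℝ) (hsum : Summable p) (htot : (∑' n : ℤ, p n) = 1)
    (S : Set ℤ) : measOf p S + measOf p Sᶜ = 1 := by
  rw [measOf, measOf, ← Summable.tsum_add (hsum.indicator S) (hsum.indicator Sᶜ)]
  rw [← htot]
  exact tsum_congr (fun n => by
    have := congrFun (Set.indicator_self_add_compl S p) n
    simpa using this)

/-! ### The tail function -/

/-- Tail function `G k = P(X ≥ k)`. -/
noncomputable def tailG (p : ℤ → ℝ) (k : ℕ) : ℝ := measOf p { n : ℤ | (k : ℤ) ≤ n }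

lemma summable_shift (p : ℤ → ℝ) (hsum : Summable p) (c : ℤ) :
    Summable (fun d : ℕ => p (c + d)) := by
  have hinj : Function.Injective (fun d : ℕ => c + (d : ℤ)) := by
    intro d1 d2 h
    simp only [add_right_inj, Int.natCast_inj] at h
    exact h
  exact hsum.comp_injective hinj

lemma tailG_nonneg (p : ℤ → ℝ) (h0 : ∀ n, 0 ≤ p n) (k : ℕ) : 0 ≤ tailG p k :=
  measOf_nonneg p h0 _

lemma tailG_anti (p : ℤ → ℝ) (h0 : ∀ n, 0 ≤ p n) (hsum : Summable p)
    {j k : ℕ} (hjk : j ≤ k) : tailG p k ≤ tailG p j := by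
  apply measOf_mono p h0 hsum
  intro n hn
  simp only [Set.mem_setOf_eq] at *
  omega

lemma tailG_rec (p : ℤ → ℝ) (hsum : Summable p) (c : ℕ) :
    tailG p c = p c + tailG p (c + 1) := by
  rw [tailG, tailG, measOf_rep, measOf_rep]
  rw [Summable.tsum_eq_zero_add (summable_shift p hsum c)]
  refine congrArg₂ (· + ·) (by norm_num) (tsum_congr fun d => ?_)
  congr 1
  push_cast
  ring

lemma tailG_ratio_p (p : ℤ → ℝ) (h0 : ∀ n, 0 ≤ p n) (hsum : Summable p)
    (hlc : ∀ n : ℤ, p (n - 1) * p (n + 1) ≤ p n ^ 2)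
    (hcs : ContigSupportInt p) {j k : ℕ} (hjk : j ≤ k) :
    tailG p (k + 1) * p j ≤ tailG p (j + 1) * p k := by
  rw [tailG, tailG, measOf_rep, measOf_rep, ← tsum_mul_right, ← tsum_mul_right]
  apply Summable.tsum_le_tsum _ ((summable_shift p hsum _).mul_right _)
    ((summable_shift p hsum _).mul_right _)
  intro d
  have h := crossA p h0 hlc hcs j k (d + 1) (by exact_mod_cast hjk)
  have e1 : ((k : ℤ) + 1) + d = (k : ℤ) + ((d + 1 : ℕ) : ℤ) := by push_cast; ring
  have e2 : ((j : ℤ) + 1) + d = (j : ℤ) + ((d + 1 : ℕ) : ℤ) := by push_cast; ring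
  push_cast at e1 e2 ⊢
  rw [e1, e2]
  push_cast at h
  linarith [h]

lemma tailG_ratio (p : ℤ → ℝ) (h0 : ∀ n, 0 ≤ p n) (hsum : Summable p)
    (hlc : ∀ n : ℤ, p (n - 1) * p (n + 1) ≤ p n ^ 2)
    (hcs : ContigSupportInt p) {j k : ℕ} (hjk : j ≤ k) :
    tailG p (k + 1) * tailG p j ≤ tailG p (j + 1) * tailG p k := by
  rw [tailG_rec p hsum j, tailG_rec p hsum k]
  have h := tailG_ratio_p p h0 hsum hlc hcs hjk
  have h1 := tailG_nonneg p h0 (k + 1)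
  have h2 := tailG_nonneg p h0 (j + 1)
  nlinarith [h, h1, h2]

lemma tailG_ratio_d (p : ℤ → ℝ) (h0 : ∀ n, 0 ≤ p n) (hsum : Summable p)
    (hlc : ∀ n : ℤ, p (n - 1) * p (n + 1) ≤ p n ^ 2)
    (hcs : ContigSupportInt p) :
    ∀ (d : ℕ) {i j : ℕ}, i ≤ j →
      tailG p (j + d) * tailG p i ≤ tailG p (i + d) * tailG p j := by
  intro d
  induction d with
  | zero => intro i j _; simp [mul_comm]
  | succ d ih =>
    intro i j hij
    have h1 := tailG_ratio p h0 hsum hlc hcs (show i + d ≤ j + d by omega)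
    rcases (tailG_nonneg p h0 (i + d)).eq_or_lt with hz | hpos
    · have hzz : tailG p (j + (d + 1)) = 0 := by
        refine le_antisymm ?_ (tailG_nonneg p h0 _)
        rw [hz]
        exact tailG_anti p h0 hsum (by omega)
      rw [hzz, zero_mul]
      exact mul_nonneg (tailG_nonneg p h0 _) (tailG_nonneg p h0 _)
    · rcases (tailG_nonneg p h0 (j + d)).eq_or_lt with hz2 | hpos2
      · have hzz : tailG p (j + (d + 1)) = 0 := by
          refine le_antisymm ?_ (tailG_nonneg p h0 _)
          rw [hz2]
          exact tailG_anti p h0 hsum (by omega)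
        rw [hzz, zero_mul]
        exact mul_nonneg (tailG_nonneg p h0 _) (tailG_nonneg p h0 _)
      · have hIH := ih hij
        have h2 := mul_le_mul_of_nonneg_right h1 (tailG_nonneg p h0 i)
        have h3 := mul_le_mul_of_nonneg_left hIH (tailG_nonneg p h0 (i + d + 1))
        have e1 : j + (d + 1) = (j + d) + 1 := by omega
        have e2 : i + (d + 1) = (i + d) + 1 := by omega
        rw [e1, e2]
        have key : (tailG p (j + d + 1) * tailG p i) * tailG p (i + d) ≤
            (tailG p (i + d + 1) * tailG p j) * tailG p (i + d) := by
          nlinarith [h2, h3]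
        exact le_of_mul_le_mul_right key hpos

lemma tailG_A (p : ℤ → ℝ) (h0 : ∀ n, 0 ≤ p n) (hsum : Summable p)
    (hlc : ∀ n : ℤ, p (n - 1) * p (n + 1) ≤ p n ^ 2)
    (hcs : ContigSupportInt p) :
    ∀ (d k : ℕ), tailG p (k + 1 + d) * tailG p k ^ d ≤ tailG p (k + 1) ^ (d + 1) := by
  intro d
  induction d with
  | zero => intro k; simp
  | succ d ih =>
    intro k
    have h7 := tailG_ratio_d p h0 hsum hlc hcs (d + 1) (show k ≤ k + 1 by omega)
    have e1 : (k + 1) + (d + 1) = k + 1 + (d + 1) := rfl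
    have e2 : k + (d + 1) = (k + 1) + d := by omega
    rw [e2] at h7
    calc tailG p (k + 1 + (d + 1)) * tailG p k ^ (d + 1)
        = (tailG p ((k + 1) + (d + 1)) * tailG p k) * tailG p k ^ d := by ring
      _ ≤ (tailG p ((k + 1) + d) * tailG p (k + 1)) * tailG p k ^ d := by
          exact mul_le_mul_of_nonneg_right h7 (pow_nonneg (tailG_nonneg p h0 k) d)
      _ = tailG p (k + 1) * (tailG p (k + 1 + d) * tailG p k ^ d) := by ring
      _ ≤ tailG p (k + 1) * tailG p (k + 1) ^ (d + 1) := by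
          exact mul_le_mul_of_nonneg_left (ih k) (tailG_nonneg p h0 (k + 1))
      _ = tailG p (k + 1) ^ (d + 1 + 1) := by ring

lemma tailG_D (p : ℤ → ℝ) (h0 : ∀ n, 0 ≤ p n) (hsum : Summable p)
    (hlc : ∀ n : ℤ, p (n - 1) * p (n + 1) ≤ p n ^ 2)
    (hcs : ContigSupportInt p) (hG1 : tailG p 1 = 1) :
    ∀ r : ℕ, tailG p (r + 2) ^ r ≤ tailG p (r + 1) ^ (r + 1) := by
  intro r
  induction r with
  | zero => simp [hG1]
  | succ r ih =>
    rcases (tailG_nonneg p h0 (r + 2)).eq_or_lt with hz | hpos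
    · have hzz : tailG p (r + 1 + 2) = 0 := by
        refine le_antisymm ?_ (tailG_nonneg p h0 _)
        rw [hz]
        exact tailG_anti p h0 hsum (by omega)
      rw [hzz, zero_pow (by omega : r + 1 ≠ 0)]
      exact pow_nonneg (tailG_nonneg p h0 _) _
    · have h6 := tailG_ratio p h0 hsum hlc hcs (show r + 1 ≤ r + 2 by omega)
      have hp6 : (tailG p (r + 2 + 1) * tailG p (r + 1)) ^ (r + 1) ≤
          (tailG p (r + 2) * tailG p (r + 2)) ^ (r + 1) :=
        pow_le_pow_left₀ (mul_nonneg (tailG_nonneg p h0 _) (tailG_nonneg p h0 _))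
          (by rw [show r + 1 + 1 = r + 2 from rfl] at h6; exact h6) (r + 1)
      have key : (tailG p (r + 1 + 2) ^ (r + 1)) * tailG p (r + 2) ^ r ≤
          (tailG p (r + 2) ^ (r + 1 + 1)) * tailG p (r + 2) ^ r := by
        calc (tailG p (r + 1 + 2) ^ (r + 1)) * tailG p (r + 2) ^ r
            ≤ (tailG p (r + 1 + 2) ^ (r + 1)) * tailG p (r + 1) ^ (r + 1) := by
              exact mul_le_mul_of_nonneg_left ih (pow_nonneg (tailG_nonneg p h0 _) _)
          _ = (tailG p (r + 2 + 1) * tailG p (r + 1)) ^ (r + 1) := by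
              rw [mul_pow]
          _ ≤ (tailG p (r + 2) * tailG p (r + 2)) ^ (r + 1) := hp6
          _ = (tailG p (r + 2) ^ (r + 1 + 1)) * tailG p (r + 2) ^ r := by ring
      exact le_of_mul_le_mul_right key (pow_pos hpos r)

lemma tailG_chord (p : ℤ → ℝ) (h0 : ∀ n, 0 ≤ p n) (hsum : Summable p)
    (hlc : ∀ n : ℤ, p (n - 1) * p (n + 1) ≤ p n ^ 2)
    (hcs : ContigSupportInt p) (hG1 : tailG p 1 = 1) :
    ∀ (α δ : ℕ), tailG p (α + 1 + δ) ^ α ≤ tailG p (α + 1) ^ (α + δ) := by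
  intro α δ
  rcases Nat.eq_zero_or_pos α with h0α | h0α
  · subst h0α
    simp only [pow_zero, zero_add]
    rw [hG1, one_pow]
  · obtain ⟨β, rfl⟩ : ∃ β, α = β + 1 := ⟨α - 1, by omega⟩
    rcases (tailG_nonneg p h0 (β + 1 + 1)).eq_or_lt with hz | hpos
    · rcases Nat.eq_zero_or_pos δ with h0δ | h0δ
      · subst h0δ; simp
      · have hzz : tailG p (β + 1 + 1 + δ) = 0 := by
          refine le_antisymm ?_ (tailG_nonneg p h0 _)
          rw [hz]
          exact tailG_anti p h0 hsum (by omega)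
        rw [hzz, zero_pow (by omega : β + 1 ≠ 0)]
        exact pow_nonneg (tailG_nonneg p h0 _) _
    · have h8 := tailG_A p h0 hsum hlc hcs δ (β + 1)
      have h8' : (tailG p (β + 1 + 1 + δ) * tailG p (β + 1) ^ δ) ^ (β + 1) ≤
          (tailG p (β + 1 + 1) ^ (δ + 1)) ^ (β + 1) :=
        pow_le_pow_left₀ (mul_nonneg (tailG_nonneg p h0 _)
          (pow_nonneg (tailG_nonneg p h0 _) _)) h8 (β + 1)
      have h9 := tailG_D p h0 hsum hlc hcs hG1 β
      have h9' : (tailG p (β + 2) ^ β) ^ δ ≤ (tailG p (β + 1) ^ (β + 1)) ^ δ :=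
        pow_le_pow_left₀ (pow_nonneg (tailG_nonneg p h0 _) _) h9 δ
      have key : (tailG p (β + 1 + 1 + δ) ^ (β + 1)) * (tailG p (β + 1 + 1) ^ (β * δ)) ≤
          (tailG p (β + 1 + 1) ^ (β + 1 + δ)) * (tailG p (β + 1 + 1) ^ (β * δ)) := by
        calc (tailG p (β + 1 + 1 + δ) ^ (β + 1)) * (tailG p (β + 1 + 1) ^ (β * δ))
            = (tailG p (β + 1 + 1 + δ) ^ (β + 1)) * ((tailG p (β + 2) ^ β) ^ δ) := by
              rw [show β + 2 = β + 1 + 1 from rfl, ← pow_mul]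
          _ ≤ (tailG p (β + 1 + 1 + δ) ^ (β + 1)) * ((tailG p (β + 1) ^ (β + 1)) ^ δ) := by
              exact mul_le_mul_of_nonneg_left h9'
                (pow_nonneg (tailG_nonneg p h0 _) _)
          _ = (tailG p (β + 1 + 1 + δ) * tailG p (β + 1) ^ δ) ^ (β + 1) := by
              rw [mul_pow, ← pow_mul, ← pow_mul, Nat.mul_comm (β + 1) δ]
          _ ≤ (tailG p (β + 1 + 1) ^ (δ + 1)) ^ (β + 1) := h8'
          _ = (tailG p (β + 1 + 1) ^ (β + 1 + δ)) * (tailG p (β + 1 + 1) ^ (β * δ)) := by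
              rw [← pow_mul, ← pow_add]
              congr 1
              ring
      exact le_of_mul_le_mul_right key (pow_pos hpos _)

set_option maxHeartbeats 2000000 in
theorem deviations_median_positive (p : ℤ → ℝ) (hp : IsLogConcavePMF p)
    (hsupp : ∀ n : ℤ, 0 < p n → 1 ≤ n) (m : ℝ)
    (hm1 : 1 / 2 ≤ measOf p { n : ℤ | m ≤ (n : ℝ) })
    (hm2 : 1 / 2 ≤ measOf p { n : ℤ | (n : ℝ) ≤ m }) :
    (∀ t : ℝ, 1 < t →
      measOf p { n : ℤ | m * t < (n : ℝ) } ≤ Real.exp (-(t * Real.log 2 / 2))) ∧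
    (∀ ε : ℝ, 0 < ε → ε < 1 →
      measOf p { n : ℤ | (n : ℝ) ≤ m * ε } ≤ 2 * Real.log 2 * ε) := by
  obtain ⟨h0, hsum, htot, hlc, hcs⟩ := hp
  have hpz : ∀ n : ℤ, n ≤ 0 → p n = 0 := by
    intro n hn
    rcases (h0 n).eq_or_lt with h | h
    · exact h.symm
    · exact absurd (hsupp n h) (by omega)
  have hG1 : tailG p 1 = 1 := by
    rw [tailG, measOf, ← htot]
    refine tsum_congr fun n => ?_
    by_cases hn : n ∈ { n : ℤ | ((1:ℕ):ℤ) ≤ n }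
    · exact Set.indicator_of_mem hn p
    · rw [Set.indicator_of_notMem hn]
      simp only [Set.mem_setOf_eq, not_le] at hn
      push_cast at hn
      exact (hpz n (by omega)).symm
  have hlog2 : 0 < Real.log 2 := Real.log_pos (by norm_num)
  -- m ≥ 1
  have hm1' : (1:ℝ) ≤ m := by
    by_contra hc
    push_neg at hc
    have hz : measOf p { n : ℤ | (n : ℝ) ≤ m } = 0 := by
      rw [measOf]
      have : ∀ n : ℤ, ({ n : ℤ | (n : ℝ) ≤ m }).indicator p n = 0 := by
        intro n
        by_cases hn : n ∈ { n : ℤ | (n : ℝ) ≤ m }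
        · rw [Set.indicator_of_mem hn]
          apply hpz
          simp only [Set.mem_setOf_eq] at hn
          by_contra hcn
          push_neg at hcn
          have : (1:ℝ) ≤ (n:ℝ) := by exact_mod_cast hcn
          linarith
        · exact Set.indicator_of_notMem hn p
      rw [tsum_congr this, tsum_zero]
    rw [hz] at hm2
    linarith
  -- the floor of m
  set K : ℕ := ⌊m⌋.toNat with hKdef
  have hKfloor : (K : ℤ) = ⌊m⌋ := Int.toNat_of_nonneg (by positivity)
  have hK1 : 1 ≤ K := by
    have : (1:ℤ) ≤ ⌊m⌋ := Int.le_floor.mpr (by exact_mod_cast hm1')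
    omega
  have hKle : (K : ℝ) ≤ m := by
    have := Int.floor_le m
    rw [← hKfloor] at this
    exact_mod_cast this
  -- G (K+1) ≤ 1/2
  have hsetK : { n : ℤ | (n : ℝ) ≤ m } = { n : ℤ | n ≤ (K:ℤ) } := by
    ext n
    simp only [Set.mem_setOf_eq, hKfloor]
    exact (Int.le_floor).symm
  have hcomplK : { n : ℤ | n ≤ (K:ℤ) }ᶜ = { n : ℤ | ((K + 1 : ℕ) : ℤ) ≤ n } := by
    ext n
    simp only [Set.mem_compl_iff, Set.mem_setOf_eq, not_le]
    push_cast
    omega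
  have hG2 : tailG p (K + 1) ≤ 1 / 2 := by
    have hc := measOf_compl p hsum htot { n : ℤ | n ≤ (K:ℤ) }
    rw [hcomplK] at hc
    rw [hsetK] at hm2
    have : tailG p (K + 1) = measOf p { n : ℤ | ((K + 1 : ℕ) : ℤ) ≤ n } := rfl
    rw [this]
    linarith
  constructor
  · -- large deviations
    intro t ht
    rcases le_or_gt t 2 with ht2 | ht2
    · -- easy case t ≤ 2
      have hsub : { n : ℤ | m * t < (n : ℝ) } ⊆ { n : ℤ | ((K + 1 : ℕ) : ℤ) ≤ n } := by
        intro n hn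
        simp only [Set.mem_setOf_eq] at *
        have hmn : m < (n : ℝ) := by nlinarith
        have : (K : ℤ) < n := by
          rw [hKfloor]
          exact Int.floor_lt.mpr hmn
        push_cast
        omega
      have h1 : measOf p { n : ℤ | m * t < (n : ℝ) } ≤ tailG p (K + 1) :=
        measOf_mono p h0 hsum hsub
      have h2 : (1/2 : ℝ) ≤ Real.exp (-(t * Real.log 2 / 2)) := by
        have he : Real.exp (-(Real.log 2)) = 1/2 := by
          rw [Real.exp_neg, Real.exp_log (by norm_num : (0:ℝ) < 2)]
          norm_num
        rw [← he]
        apply Real.exp_le_exp.mpr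
        nlinarith
      linarith
    · -- main case t > 2
      set N : ℕ := ⌊m * t⌋.toNat with hNdef
      have hmt1 : (1:ℝ) ≤ m * t := by nlinarith
      have hNfloor : (N : ℤ) = ⌊m * t⌋ := Int.toNat_of_nonneg (by positivity)
      have hNle : (N : ℝ) ≤ m * t := by
        have := Int.floor_le (m * t)
        rw [← hNfloor] at this
        exact_mod_cast this
      have hNgt : m * t < (N : ℝ) + 1 := by
        have := Int.lt_floor_add_one (m * t)
        rw [← hNfloor] at this
        push_cast at this
        exact_mod_cast this
      have hKN : K + 1 ≤ N := by
        have h1 : (⌊m⌋ + 1 : ℤ) ≤ ⌊m * t⌋ := by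
          apply Int.le_floor.mpr
          push_cast
          have := Int.floor_le m
          nlinarith
        omega
      have hset : { n : ℤ | m * t < (n : ℝ) } = { n : ℤ | ((N + 1 : ℕ) : ℤ) ≤ n } := by
        ext n
        simp only [Set.mem_setOf_eq]
        constructor
        · intro h
          have : (N:ℤ) < n := by rw [hNfloor]; exact Int.floor_lt.mpr h
          push_cast
          omega
        · intro h
          push_cast at h
          have hn : (N:ℝ) + 1 ≤ (n:ℝ) := by exact_mod_cast h
          linarith
      have hmeas : measOf p { n : ℤ | m * t < (n : ℝ) } = tailG p (N + 1) := by
        rw [hset]; rfl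
      have hchord : tailG p (N + 1) ^ K ≤ tailG p (K + 1) ^ N := by
        have h := tailG_chord p h0 hsum hlc hcs hG1 K (N - K)
        rw [show K + 1 + (N - K) = N + 1 by omega, show K + (N - K) = N by omega] at h
        exact h
      have hhalf : tailG p (K + 1) ^ N ≤ (1/2 : ℝ) ^ N :=
        pow_le_pow_left₀ (tailG_nonneg p h0 _) hG2 N
      have hx : tailG p (N + 1) ^ K ≤ (1/2 : ℝ) ^ N := le_trans hchord hhalf
      have hxnn : 0 ≤ tailG p (N + 1) := tailG_nonneg p h0 _
      have hKpos : (0:ℝ) < (K:ℝ) := by exact_mod_cast hK1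
      -- pass to rpow
      have h1 : tailG p (N + 1) ^ ((K:ℕ):ℝ) ≤ ((1/2 : ℝ)) ^ ((N:ℕ):ℝ) := by
        rw [Real.rpow_natCast, Real.rpow_natCast]
        exact hx
      have h3 : (tailG p (N + 1) ^ ((K:ℕ):ℝ)) ^ (1/(K:ℝ)) ≤
          (((1/2 : ℝ)) ^ ((N:ℕ):ℝ)) ^ (1/(K:ℝ)) :=
        Real.rpow_le_rpow (Real.rpow_nonneg hxnn _) h1 (by positivity)
      have h2 : (tailG p (N + 1) ^ ((K:ℕ):ℝ)) ^ (1/(K:ℝ)) = tailG p (N + 1) := by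
        rw [← Real.rpow_mul hxnn, mul_one_div_cancel (ne_of_gt hKpos), Real.rpow_one]
      have h4 : (((1/2 : ℝ)) ^ ((N:ℕ):ℝ)) ^ (1/(K:ℝ)) =
          Real.exp (-((N:ℝ)/(K:ℝ) * Real.log 2)) := by
        rw [← Real.rpow_mul (by norm_num : (0:ℝ) ≤ 1/2),
          Real.rpow_def_of_pos (by norm_num : (0:ℝ) < 1/2)]
        congr 1
        rw [one_div, Real.log_inv]
        ring
      have hN1 : (1:ℝ) ≤ (N:ℝ) := by
        have : 1 ≤ N := by omega
        exact_mod_cast this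
      have htK : t * (K:ℝ) ≤ 2 * (N:ℝ) := by nlinarith
      have h5 : Real.exp (-((N:ℝ)/(K:ℝ) * Real.log 2)) ≤
          Real.exp (-(t * Real.log 2 / 2)) := by
        apply Real.exp_le_exp.mpr
        have hdiv : t / 2 ≤ (N:ℝ) / (K:ℝ) := by
          rw [div_le_div_iff₀ (by norm_num : (0:ℝ) < 2) hKpos]
          linarith
        nlinarith
      rw [hmeas, ← h2]
      calc (tailG p (N + 1) ^ ((K:ℕ):ℝ)) ^ (1/(K:ℝ))
          ≤ (((1/2 : ℝ)) ^ ((N:ℕ):ℝ)) ^ (1/(K:ℝ)) := h3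
        _ = Real.exp (-((N:ℝ)/(K:ℝ) * Real.log 2)) := h4
        _ ≤ Real.exp (-(t * Real.log 2 / 2)) := h5
  · -- small deviations
    intro ε hε0 hε1
    rcases lt_or_ge (m * ε) 1 with hlt | hge
    · -- trivial case: the set carries no mass
      have hz : measOf p { n : ℤ | (n : ℝ) ≤ m * ε } = 0 := by
        rw [measOf]
        have : ∀ n : ℤ, ({ n : ℤ | (n : ℝ) ≤ m * ε }).indicator p n = 0 := by
          intro n
          by_cases hn : n ∈ { n : ℤ | (n : ℝ) ≤ m * ε }
          · rw [Set.indicator_of_mem hn]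
            apply hpz
            simp only [Set.mem_setOf_eq] at hn
            by_contra hcn
            push_neg at hcn
            have : (1:ℝ) ≤ (n:ℝ) := by exact_mod_cast hcn
            linarith
          · exact Set.indicator_of_notMem hn p
        rw [tsum_congr this, tsum_zero]
      rw [hz]
      positivity
    · -- main case
      have hmgt1 : 1 < m := by nlinarith
      set L : ℕ := ⌊m * ε⌋.toNat with hLdef
      have hLfloor : (L : ℤ) = ⌊m * ε⌋ := Int.toNat_of_nonneg (by positivity)
      have hL1 : 1 ≤ L := by
        have : (1:ℤ) ≤ ⌊m * ε⌋ := Int.le_floor.mpr (by exact_mod_cast hge)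
        omega
      have hLle : (L : ℝ) ≤ m * ε := by
        have := Int.floor_le (m * ε)
        rw [← hLfloor] at this
        exact_mod_cast this
      set M : ℕ := ⌈m⌉.toNat with hMdef
      have hMceil : (M : ℤ) = ⌈m⌉ := Int.toNat_of_nonneg (by positivity)
      have hMge : m ≤ (M : ℝ) := by
        have := Int.le_ceil m
        rw [← hMceil] at this
        exact_mod_cast this
      have hMlt : (M : ℝ) < m + 1 := by
        have := Int.ceil_lt_add_one m
        rw [← hMceil] at this
        exact_mod_cast this
      have hM2 : 2 ≤ M := by
        have : (1:ℝ) < (M:ℝ) := lt_of_lt_of_le hmgt1 hMge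
        have h1 : 1 < M := by exact_mod_cast this
        omega
      have hmε : m * ε < m := by nlinarith [hmgt1, hε1, hε0]
      have hLM : L + 1 ≤ M := by
        have h1 : (L : ℝ) < (M : ℝ) := lt_of_le_of_lt hLle (lt_of_lt_of_le hmε hMge)
        have : L < M := by exact_mod_cast h1
        omega
      -- 1/2 ≤ G M
      have hsetM : { n : ℤ | m ≤ (n : ℝ) } = { n : ℤ | ((M:ℕ) : ℤ) ≤ n } := by
        ext n
        simp only [Set.mem_setOf_eq, hMceil]
        exact (Int.ceil_le).symm
      have hGM : 1/2 ≤ tailG p M := by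
        rw [hsetM] at hm1
        exact hm1
      -- chord
      set D : ℕ := M - 1 with hDdef
      have hD1 : 1 ≤ D := by omega
      have hchord : tailG p M ^ L ≤ tailG p (L + 1) ^ D := by
        have h := tailG_chord p h0 hsum hlc hcs hG1 L (M - 1 - L)
        rw [show L + 1 + (M - 1 - L) = M by omega, show L + (M - 1 - L) = D by omega] at h
        exact h
      have hpow : (1/2 : ℝ) ^ L ≤ tailG p (L + 1) ^ D :=
        le_trans (pow_le_pow_left₀ (by norm_num) hGM L) hchord
      have hynn : 0 ≤ tailG p (L + 1) := tailG_nonneg p h0 _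
      have hDpos : (0:ℝ) < (D:ℝ) := by exact_mod_cast hD1
      -- pass to rpow
      have h1 : ((1/2 : ℝ)) ^ ((L:ℕ):ℝ) ≤ tailG p (L + 1) ^ ((D:ℕ):ℝ) := by
        rw [Real.rpow_natCast, Real.rpow_natCast]
        exact hpow
      have h3 : (((1/2 : ℝ)) ^ ((L:ℕ):ℝ)) ^ (1/(D:ℝ)) ≤
          (tailG p (L + 1) ^ ((D:ℕ):ℝ)) ^ (1/(D:ℝ)) :=
        Real.rpow_le_rpow (Real.rpow_nonneg (by norm_num) _) h1 (by positivity)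
      have h2 : (tailG p (L + 1) ^ ((D:ℕ):ℝ)) ^ (1/(D:ℝ)) = tailG p (L + 1) := by
        rw [← Real.rpow_mul hynn, mul_one_div_cancel (ne_of_gt hDpos), Real.rpow_one]
      have h4 : (((1/2 : ℝ)) ^ ((L:ℕ):ℝ)) ^ (1/(D:ℝ)) =
          Real.exp (-((L:ℝ)/(D:ℝ) * Real.log 2)) := by
        rw [← Real.rpow_mul (by norm_num : (0:ℝ) ≤ 1/2),
          Real.rpow_def_of_pos (by norm_num : (0:ℝ) < 1/2)]
        congr 1
        rw [one_div, Real.log_inv]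
        ring
      have hylb : 1 - (L:ℝ)/(D:ℝ) * Real.log 2 ≤ tailG p (L + 1) := by
        have he : 1 - (L:ℝ)/(D:ℝ) * Real.log 2 ≤
            Real.exp (-((L:ℝ)/(D:ℝ) * Real.log 2)) := by
          have := Real.add_one_le_exp (-((L:ℝ)/(D:ℝ) * Real.log 2))
          linarith
        calc 1 - (L:ℝ)/(D:ℝ) * Real.log 2
            ≤ Real.exp (-((L:ℝ)/(D:ℝ) * Real.log 2)) := he
          _ = (((1/2 : ℝ)) ^ ((L:ℕ):ℝ)) ^ (1/(D:ℝ)) := h4.symm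
          _ ≤ (tailG p (L + 1) ^ ((D:ℕ):ℝ)) ^ (1/(D:ℝ)) := h3
          _ = tailG p (L + 1) := h2
      -- the measure of the set is 1 - G (L+1)
      have hsetL : { n : ℤ | (n : ℝ) ≤ m * ε } = { n : ℤ | n ≤ (L:ℤ) } := by
        ext n
        simp only [Set.mem_setOf_eq, hLfloor]
        exact (Int.le_floor).symm
      have hcomplL : { n : ℤ | n ≤ (L:ℤ) }ᶜ = { n : ℤ | ((L + 1 : ℕ) : ℤ) ≤ n } := by
        ext n
        simp only [Set.mem_compl_iff, Set.mem_setOf_eq, not_le]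
        push_cast
        omega
      have hmeas : measOf p { n : ℤ | (n : ℝ) ≤ m * ε } = 1 - tailG p (L + 1) := by
        have hc := measOf_compl p hsum htot { n : ℤ | n ≤ (L:ℤ) }
        rw [hcomplL] at hc
        rw [hsetL, show tailG p (L + 1) = measOf p { n : ℤ | ((L + 1 : ℕ) : ℤ) ≤ n }
          from by rw [tailG]]
        linarith
      -- final comparison
      have hDm : m ≤ 2 * (D:ℝ) := by
        have hDcast : (D:ℝ) = (M:ℝ) - 1 := by
          have : (D:ℤ) = (M:ℤ) - 1 := by omega
          push_cast at this
          exact_mod_cast this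
        rcases le_or_gt 2 m with hm2' | hm2'
        · nlinarith
        · have hM3 : (M:ℝ) < 3 := by linarith
          have : M < 3 := by exact_mod_cast hM3
          have hMeq : M = 2 := by omega
          rw [hDcast, hMeq]
          norm_num
          linarith
      have hLD : (L:ℝ)/(D:ℝ) ≤ 2 * ε := by
        rw [div_le_iff₀ hDpos]
        nlinarith
      have hfin : (L:ℝ)/(D:ℝ) * Real.log 2 ≤ 2 * Real.log 2 * ε := by
        have := mul_le_mul_of_nonneg_right hLD (le_of_lt hlog2)
        nlinarith
      rw [hmeas]
      linarith
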